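/- Hypothesis-testing characterization: for any channel W and k ≤ |X|, 1 − S^NS(W,k) = min over distributions μ on X of max over distributions ν on Y of β_{1−1/k}(μ·ν, μ·W), where β_α(P,Q) = min{ ∑_z Q(z)T(z) : T : Z → [0,1], ∑_z P(z)T(z) ≥ α }. -/

import Mathlib

open Finset

set_option maxHeartbeats 1000000

/-- Non-signaling (LP relaxation) value `S^NS(W,k)`. -/
noncomputable def SchanNS {X Y : Type*} [Fintype X] [Fintype Y] (W : X → Y → ℝ) (k : ℕ) : ℝ :=
  sSup { v : ℝ | ∃ r : X → Y → ℝ, ∃ p : X → ℝ,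
    (∀ x y, 0 ≤ r x y) ∧ (∀ x y, r x y ≤ p x) ∧ (∀ x, p x ≤ 1) ∧
    (∀ y, ∑ x, r x y ≤ 1) ∧ (∑ x, p x = k) ∧
    v = (1 / k) * ∑ x, ∑ y, W x y * r x y }

/-- Optimal type-II error `β_α(P,Q)` of a hypothesis test distinguishing `P` from `Q`. -/
noncomputable def betaHT {Z : Type*} [Fintype Z] (α : ℝ) (P Q : Z → ℝ) : ℝ :=
  sInf { v : ℝ | ∃ T : Z → ℝ, (∀ z, 0 ≤ T z) ∧ (∀ z, T z ≤ 1) ∧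
    α ≤ ∑ z, P z * T z ∧ v = ∑ z, Q z * T z }

lemma betaHT_le {Z : Type*} [Fintype Z] {a : ℝ} {P Q : Z → ℝ} (hQ : ∀ z, 0 ≤ Q z)
    (T : Z → ℝ) (h0 : ∀ z, 0 ≤ T z) (h1 : ∀ z, T z ≤ 1) (hc : a ≤ ∑ z, P z * T z) :
    betaHT a P Q ≤ ∑ z, Q z * T z := by
  apply csInf_le
  · refine ⟨0, ?_⟩
    rintro v ⟨T', hT0, _, _, rfl⟩
    exact Finset.sum_nonneg fun z _ => mul_nonneg (hQ z) (hT0 z)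
  · exact ⟨T, h0, h1, hc, rfl⟩

lemma le_betaHT {Z : Type*} [Fintype Z] {a c : ℝ} {P Q : Z → ℝ} (hP : a ≤ ∑ z, P z)
    (h : ∀ T : Z → ℝ, (∀ z, 0 ≤ T z) → (∀ z, T z ≤ 1) → a ≤ ∑ z, P z * T z →
      c ≤ ∑ z, Q z * T z) :
    c ≤ betaHT a P Q := by
  apply le_csInf
  · exact ⟨∑ z, Q z * 1, fun _ => 1, fun _ => zero_le_one, fun _ => le_refl 1,
      by simpa using hP, rfl⟩
  · rintro v ⟨T, hT0, hT1, hTc, rfl⟩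
    exact h T hT0 hT1 hTc

lemma betaHT_nonneg {Z : Type*} [Fintype Z] {a : ℝ} {P Q : Z → ℝ} (hQ : ∀ z, 0 ≤ Q z)
    (hP : a ≤ ∑ z, P z) : 0 ≤ betaHT a P Q :=
  le_betaHT hP fun T hT0 _ _ => Finset.sum_nonneg fun z _ => mul_nonneg (hQ z) (hT0 z)

lemma bump_lemma {X : Type*} [Fintype X] (q : X → ℝ) (k : ℕ) (hq1 : ∀ x, q x ≤ 1)
    (hqs : ∑ x, q x ≤ k) (hkX : (k : ℝ) ≤ Fintype.card X) :
    ∃ p : X → ℝ, (∀ x, q x ≤ p x) ∧ (∀ x, p x ≤ 1) ∧ ∑ x, p x = k := by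
  set d : ℝ := (Fintype.card X : ℝ) - ∑ x, q x with hd
  have hd0 : 0 ≤ d := by simp only [hd]; linarith
  have hsum1 : ∑ x, (1 - q x) = d := by
    rw [Finset.sum_sub_distrib]
    simp [hd, Finset.card_univ]
  by_cases hdz : d = 0
  · refine ⟨q, fun x => le_refl _, hq1, ?_⟩
    have : (Fintype.card X : ℝ) = ∑ x, q x := by simp only [hd] at hdz; linarith
    linarith
  · have hdpos : 0 < d := lt_of_le_of_ne hd0 (Ne.symm hdz)
    set θ : ℝ := ((k : ℝ) - ∑ x, q x) / d with hθ
    have hθ0 : 0 ≤ θ := div_nonneg (by linarith) hd0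
    have hθ1 : θ ≤ 1 := by
      rw [hθ, div_le_one hdpos]; simp only [hd]; linarith
    refine ⟨fun x => q x + θ * (1 - q x), ?_, ?_, ?_⟩
    · intro x
      have := mul_nonneg hθ0 (sub_nonneg.mpr (hq1 x))
      show q x ≤ q x + θ * (1 - q x)
      linarith
    · intro x
      show q x + θ * (1 - q x) ≤ 1
      nlinarith [mul_nonneg (sub_nonneg.mpr hθ1) (sub_nonneg.mpr (hq1 x))]
    · rw [Finset.sum_add_distrib, ← Finset.mul_sum, hsum1, hθ]
      field_simp; ring

lemma threshold_lemma {X : Type*} [Fintype X] [Nonempty X] (μ w : X → ℝ)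
    (hμ0 : ∀ x, 0 ≤ μ x) (hμ1 : ∑ x, μ x = 1) (hw : ∀ x, 0 ≤ w x)
    {a : ℝ} (ha0 : 0 ≤ a) (ha1 : a ≤ 1) :
    ∃ (t : ℝ) (u : X → ℝ), 0 ≤ t ∧ (∀ x, 0 ≤ u x) ∧ (∀ x, u x ≤ μ x) ∧
      (∑ x, u x = a) ∧
      ∑ x, w x * u x = a * t - ∑ x, μ x * max (t - w x) 0 := by
  classical
  set s : Finset X := univ.filter
    (fun c => a ≤ ∑ x ∈ univ.filter (fun x => w x ≤ w c), μ x) with hs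
  have hsne : s.Nonempty := by
    obtain ⟨c, _, hc⟩ := Finset.exists_max_image univ w univ_nonempty
    refine ⟨c, ?_⟩
    rw [hs, Finset.mem_filter]
    refine ⟨mem_univ c, ?_⟩
    have : univ.filter (fun x => w x ≤ w c) = univ := by
      apply Finset.filter_true_of_mem
      intro x _; exact hc x (mem_univ x)
    rw [this, hμ1]; exact ha1
  obtain ⟨c₀, hc₀s, hc₀min⟩ := Finset.exists_min_image s w hsne
  set t := w c₀ with htdef
  have ht0 : 0 ≤ t := hw c₀
  have hFle : a ≤ ∑ x ∈ univ.filter (fun x => w x ≤ t), μ x := by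
    rw [hs, Finset.mem_filter] at hc₀s; exact hc₀s.2
  set Flt := ∑ x ∈ univ.filter (fun x => w x < t), μ x with hFltdef
  set Feq := ∑ x ∈ univ.filter (fun x => w x = t), μ x with hFeqdef
  have hFlt0 : 0 ≤ Flt := Finset.sum_nonneg fun x _ => hμ0 x
  have hFeq0 : 0 ≤ Feq := Finset.sum_nonneg fun x _ => hμ0 x
  have hFlta : Flt ≤ a := by
    by_contra hcon
    push_neg at hcon
    have hne : (univ.filter (fun x => w x < t)).Nonempty := by
      rcases Finset.eq_empty_or_nonempty (univ.filter (fun x => w x < t)) with h | h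
      · rw [hFltdef, h, Finset.sum_empty] at hcon; linarith
      · exact h
    obtain ⟨c', hc'mem, hc'max⟩ := Finset.exists_max_image _ w hne
    have hc't : w c' < t := (Finset.mem_filter.mp hc'mem).2
    have hc's : c' ∈ s := by
      rw [hs, Finset.mem_filter]
      refine ⟨mem_univ c', le_trans (le_of_lt hcon) ?_⟩
      apply Finset.sum_le_sum_of_subset_of_nonneg
      · intro x hx
        rw [Finset.mem_filter] at hx ⊢
        exact ⟨mem_univ x, hc'max x (Finset.mem_filter.mpr ⟨mem_univ x, hx.2⟩)⟩
      · intro x _ _; exact hμ0 x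
    exact absurd (hc₀min c' hc's) (by linarith)
  have hsplit : Flt + Feq = ∑ x ∈ univ.filter (fun x => w x ≤ t), μ x := by
    rw [hFltdef, hFeqdef, Finset.sum_filter, Finset.sum_filter, Finset.sum_filter,
      ← Finset.sum_add_distrib]
    apply Finset.sum_congr rfl
    intro x _
    rcases lt_trichotomy (w x) t with h | h | h
    · simp [h, ne_of_lt h, le_of_lt h]
    · simp [h]
    · simp [not_lt.mpr (le_of_lt h), ne_of_gt h, not_le.mpr h]
  have hale : a ≤ Flt + Feq := by rw [hsplit]; exact hFle
  set γ : ℝ := if Feq = 0 then 0 else (a - Flt) / Feq with hγdef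
  have hγ0 : 0 ≤ γ := by
    rw [hγdef]; split_ifs with h
    · exact le_refl 0
    · exact div_nonneg (by linarith) hFeq0
  have hγ1 : γ ≤ 1 := by
    rw [hγdef]; split_ifs with h
    · exact zero_le_one
    · rw [div_le_one (lt_of_le_of_ne hFeq0 (Ne.symm h))]; linarith
  set u : X → ℝ := fun x => if w x < t then μ x else if w x = t then γ * μ x else 0 with hudef
  have husum : ∑ x, u x = a := by
    have : ∀ x, u x = (if w x < t then μ x else 0) + γ * (if w x = t then μ x else 0) := by
      intro x
      simp only [hudef]
      rcases lt_trichotomy (w x) t with h | h | h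
      · rw [if_pos h, if_pos h, if_neg (ne_of_lt h)]; ring
      · rw [if_neg (by rw [h]; exact lt_irrefl t), if_pos h,
          if_neg (by rw [h]; exact lt_irrefl t), if_pos h]; ring
      · rw [if_neg (not_lt.mpr h.le), if_neg (ne_of_gt h),
          if_neg (not_lt.mpr h.le), if_neg (ne_of_gt h)]; ring
    rw [Finset.sum_congr rfl (fun x _ => this x), Finset.sum_add_distrib, ← Finset.mul_sum,
      ← Finset.sum_filter, ← Finset.sum_filter, ← hFltdef, ← hFeqdef]
    rw [hγdef]
    split_ifs with h
    · have : Flt = a := by rw [h] at hale; linarith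
      rw [this]; ring
    · field_simp; ring
  refine ⟨t, u, ht0, ?_, ?_, husum, ?_⟩
  · intro x
    simp only [hudef]
    split_ifs with h1 h2
    · exact hμ0 x
    · exact mul_nonneg hγ0 (hμ0 x)
    · exact le_refl 0
  · intro x
    simp only [hudef]
    split_ifs with h1 h2
    · exact le_refl _
    · calc γ * μ x ≤ 1 * μ x := mul_le_mul_of_nonneg_right hγ1 (hμ0 x)
        _ = μ x := one_mul _
    · exact hμ0 x
  · have hpt : ∀ x, w x * u x = t * u x - μ x * max (t - w x) 0 := by
      intro x
      simp only [hudef]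
      rcases lt_trichotomy (w x) t with h | h | h
      · rw [if_pos h, max_eq_left (by linarith)]; ring
      · rw [if_neg (by rw [h]; exact lt_irrefl t), if_pos h, h, sub_self, max_self]; ring
      · rw [if_neg (not_lt.mpr h.le), if_neg (ne_of_gt h), max_eq_right (by linarith)]; ring
    rw [Finset.sum_congr rfl (fun x _ => hpt x), Finset.sum_sub_distrib, ← Finset.mul_sum,
      husum]
    ring

theorem meta_converse_hypothesis_testing {X Y : Type*} [Fintype X] [Fintype Y]
    (W : X → Y → ℝ) (hW_nonneg : ∀ x y, 0 ≤ W x y) (hW_sum : ∀ x, ∑ y, W x y = 1)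
    (k : ℕ) (hk : 1 ≤ k) (hkX : k ≤ Fintype.card X) :
    1 - SchanNS W k =
      sInf { v : ℝ | ∃ μ : X → ℝ, (∀ x, 0 ≤ μ x) ∧ (∑ x, μ x = 1) ∧
        v = sSup { w : ℝ | ∃ ν : Y → ℝ, (∀ y, 0 ≤ ν y) ∧ (∑ y, ν y = 1) ∧
          w = betaHT (1 - 1 / (k : ℝ))
                (fun z : X × Y => μ z.1 * ν z.2)
                (fun z : X × Y => μ z.1 * W z.1 z.2) } } := by
  classical
  have hk0 : (0:ℝ) < k := by exact_mod_cast hk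
  have hkne : (k:ℝ) ≠ 0 := ne_of_gt hk0
  have hXcard : 0 < Fintype.card X := lt_of_lt_of_le hk hkX
  have hXcard' : (0:ℝ) < Fintype.card X := by exact_mod_cast hXcard
  have hXne : Nonempty X := Fintype.card_pos_iff.mp hXcard
  have hYne : Nonempty Y := by
    by_contra h
    rw [not_nonempty_iff] at h
    have h1 := hW_sum (Classical.arbitrary X)
    rw [Finset.univ_eq_empty, Finset.sum_empty] at h1
    exact zero_ne_one h1
  have hYcard' : (0:ℝ) < Fintype.card Y := by exact_mod_cast Fintype.card_pos
  set a : ℝ := 1 - 1 / (k : ℝ) with hadef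
  have ha0 : 0 ≤ a := by
    have h1 : 1 / (k:ℝ) ≤ 1 := by
      rw [div_le_one hk0]; exact_mod_cast hk
    simp only [hadef]; linarith
  have ha1 : a ≤ 1 := by
    have h1 : 0 < 1 / (k:ℝ) := by positivity
    simp only [hadef]; linarith
  have hW1 : ∀ x y, W x y ≤ 1 := by
    intro x y
    calc W x y ≤ ∑ y', W x y' :=
          Finset.single_le_sum (fun y' _ => hW_nonneg x y') (mem_univ y)
      _ = 1 := hW_sum x
  set A : Set ℝ := { v : ℝ | ∃ r : X → Y → ℝ, ∃ p : X → ℝ,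
    (∀ x y, 0 ≤ r x y) ∧ (∀ x y, r x y ≤ p x) ∧ (∀ x, p x ≤ 1) ∧
    (∀ y, ∑ x, r x y ≤ 1) ∧ (∑ x, p x = k) ∧
    v = (1 / k) * ∑ x, ∑ y, W x y * r x y } with hAdef
  have hSA : SchanNS W k = sSup A := rfl
  have hAbdd : BddAbove A := by
    refine ⟨(Fintype.card X : ℝ) / k, ?_⟩
    rintro v ⟨r, p, hr0, hrp, hp1, hry, hps, rfl⟩
    have hin : ∀ x, ∑ y, W x y * r x y ≤ 1 := by
      intro x
      calc ∑ y, W x y * r x y ≤ ∑ y, W x y := by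
            apply Finset.sum_le_sum
            intro y _
            exact mul_le_of_le_one_right (hW_nonneg x y) (le_trans (hrp x y) (hp1 x))
        _ = 1 := hW_sum x
    have hsum : ∑ x, ∑ y, W x y * r x y ≤ (Fintype.card X : ℝ) := by
      calc ∑ x, ∑ y, W x y * r x y ≤ ∑ _x : X, (1:ℝ) :=
            Finset.sum_le_sum (fun x _ => hin x)
        _ = (Fintype.card X : ℝ) := by simp
    calc (1 / (k:ℝ)) * ∑ x, ∑ y, W x y * r x y
        ≤ (1 / (k:ℝ)) * (Fintype.card X : ℝ) :=
          mul_le_mul_of_nonneg_left hsum (by positivity)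
      _ = (Fintype.card X : ℝ) / k := by ring
  have h0A : (0:ℝ) ∈ A := by
    refine ⟨fun _ _ => 0, fun _ => (k:ℝ)/(Fintype.card X:ℝ), ?_, ?_, ?_, ?_, ?_, ?_⟩
    · intro x y; exact le_refl 0
    · intro x y; positivity
    · intro x
      rw [div_le_one hXcard']
      exact_mod_cast hkX
    · intro y; simp
    · rw [Finset.sum_const, Finset.card_univ, nsmul_eq_mul]
      field_simp
    · simp
  have hAne : A.Nonempty := ⟨0, h0A⟩
  set B : Set ℝ := { v : ℝ | ∃ μ : X → ℝ, (∀ x, 0 ≤ μ x) ∧ (∑ x, μ x = 1) ∧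
    v = sSup { w : ℝ | ∃ ν : Y → ℝ, (∀ y, 0 ≤ ν y) ∧ (∑ y, ν y = 1) ∧
      w = betaHT a (fun z : X × Y => μ z.1 * ν z.2)
            (fun z : X × Y => μ z.1 * W z.1 z.2) } } with hBdef
  show 1 - SchanNS W k = sInf B
  have hprodsum : ∀ (μ : X → ℝ) (ν : Y → ℝ), (∑ x, μ x = 1) → (∑ y, ν y = 1) →
      ∑ z : X × Y, μ z.1 * ν z.2 = 1 := by
    intro μ ν hμ hν
    rw [Fintype.sum_prod_type]
    have h1 : ∀ x, ∑ y, μ x * ν y = μ x := by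
      intro x; rw [← Finset.mul_sum, hν, mul_one]
    rw [Finset.sum_congr rfl (fun x _ => h1 x), hμ]
  have hbetafeas : ∀ (μ : X → ℝ) (ν : Y → ℝ), (∑ x, μ x = 1) → (∑ y, ν y = 1) →
      a ≤ ∑ z : X × Y, μ z.1 * ν z.2 := by
    intro μ ν hμ hν; rw [hprodsum μ ν hμ hν]; exact ha1
  have hνunif : ∃ ν : Y → ℝ, (∀ y, 0 ≤ ν y) ∧ (∑ y, ν y = 1) := by
    refine ⟨fun _ => 1/(Fintype.card Y:ℝ), fun y => by positivity, ?_⟩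
    rw [Finset.sum_const, Finset.card_univ, nsmul_eq_mul]
    field_simp
  have hνbdd : ∀ μ : X → ℝ, (∀ x, 0 ≤ μ x) → (∑ x, μ x = 1) →
      BddAbove { w : ℝ | ∃ ν : Y → ℝ, (∀ y, 0 ≤ ν y) ∧ (∑ y, ν y = 1) ∧
        w = betaHT a (fun z : X × Y => μ z.1 * ν z.2)
              (fun z : X × Y => μ z.1 * W z.1 z.2) } := by
    intro μ hμ0 hμs
    refine ⟨∑ z : X × Y, μ z.1 * W z.1 z.2, ?_⟩
    rintro w ⟨ν, hν0, hνs, rfl⟩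
    have h := betaHT_le (a := a) (P := fun z : X × Y => μ z.1 * ν z.2)
      (Q := fun z : X × Y => μ z.1 * W z.1 z.2)
      (fun z => mul_nonneg (hμ0 z.1) (hW_nonneg z.1 z.2)) (fun _ => 1)
      (fun _ => zero_le_one) (fun _ => le_refl 1)
      (by simpa using hbetafeas μ ν hμs hνs)
    simpa using h
  have hBbdd : BddBelow B := by
    refine ⟨0, ?_⟩
    rintro v ⟨μ, hμ0, hμs, rfl⟩
    obtain ⟨ν, hν0, hνs⟩ := hνunif
    have h1 : 0 ≤ betaHT a (fun z : X × Y => μ z.1 * ν z.2)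
        (fun z : X × Y => μ z.1 * W z.1 z.2) :=
      betaHT_nonneg (P := fun z : X × Y => μ z.1 * ν z.2)
        (Q := fun z : X × Y => μ z.1 * W z.1 z.2)
        (fun z => mul_nonneg (hμ0 z.1) (hW_nonneg z.1 z.2))
        (hbetafeas μ ν hμs hνs)
    exact le_trans h1 (le_csSup (hνbdd μ hμ0 hμs) ⟨ν, hν0, hνs, rfl⟩)
  -- Direction A : sInf B ≤ 1 - S
  have dirA : sInf B ≤ 1 - SchanNS W k := by
    apply le_of_forall_pos_le_add
    intro ε hε
    have hlt : SchanNS W k - ε < sSup A := by rw [hSA]; linarith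
    obtain ⟨v, hvA, hvlt⟩ := exists_lt_of_lt_csSup hAne hlt
    obtain ⟨r, p, hr0, hrp, hp1, hry, hps, hveq⟩ := hvA
    have hp0 : ∀ x, 0 ≤ p x := fun x => le_trans (hr0 x (Classical.arbitrary Y)) (hrp x _)
    set μ : X → ℝ := fun x => p x / k with hμdef
    have hμ0 : ∀ x, 0 ≤ μ x := fun x => div_nonneg (hp0 x) hk0.le
    have hμs : ∑ x, μ x = 1 := by
      simp only [hμdef]
      rw [← Finset.sum_div, hps]
      field_simp
    refine le_trans (csInf_le hBbdd ⟨μ, hμ0, hμs, rfl⟩) ?_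
    have hsup_le : sSup { w : ℝ | ∃ ν : Y → ℝ, (∀ y, 0 ≤ ν y) ∧ (∑ y, ν y = 1) ∧
        w = betaHT a (fun z : X × Y => μ z.1 * ν z.2)
              (fun z : X × Y => μ z.1 * W z.1 z.2) } ≤ 1 - v := by
      apply csSup_le
      · obtain ⟨ν, hν0, hνs⟩ := hνunif
        exact ⟨_, ν, hν0, hνs, rfl⟩
      rintro w ⟨ν, hν0, hνs, rfl⟩
      set T : X × Y → ℝ := fun z => if p z.1 = 0 then 1 else 1 - r z.1 z.2 / p z.1 with hTdef
      have hpT : ∀ x y, p x * T (x, y) = p x - r x y := by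
        intro x y
        simp only [hTdef]
        by_cases h : p x = 0
        · have hrz : r x y = 0 := le_antisymm (h ▸ hrp x y) (hr0 x y)
          rw [if_pos h, h, hrz]; ring
        · rw [if_neg h]
          field_simp
      have hT0 : ∀ z : X × Y, 0 ≤ T z := by
        intro z; simp only [hTdef]
        split_ifs with h
        · exact zero_le_one
        · have hppos : 0 < p z.1 := lt_of_le_of_ne (hp0 z.1) (Ne.symm h)
          have : r z.1 z.2 / p z.1 ≤ 1 := (div_le_one hppos).mpr (hrp z.1 z.2)
          linarith
      have hT1 : ∀ z : X × Y, T z ≤ 1 := by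
        intro z; simp only [hTdef]
        split_ifs with h
        · exact le_refl 1
        · have hppos : 0 < p z.1 := lt_of_le_of_ne (hp0 z.1) (Ne.symm h)
          have : 0 ≤ r z.1 z.2 / p z.1 := div_nonneg (hr0 z.1 z.2) hppos.le
          linarith
      have hTc : a ≤ ∑ z : X × Y, (μ z.1 * ν z.2) * T z := by
        have key : ∀ y, ∑ x, (μ x * ν y) * T (x, y) = ν y / k * ((k:ℝ) - ∑ x, r x y) := by
          intro y
          have h1 : ∀ x, (μ x * ν y) * T (x, y) = ν y / k * (p x - r x y) := by
            intro x
            rw [← hpT x y]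
            simp only [hμdef]
            ring
          rw [Finset.sum_congr rfl fun x _ => h1 x, ← Finset.mul_sum,
            Finset.sum_sub_distrib, hps]
        rw [Fintype.sum_prod_type, Finset.sum_comm,
          Finset.sum_congr rfl fun y _ => key y]
        have hge : ∀ y, ν y / k * ((k:ℝ) - 1) ≤ ν y / k * ((k:ℝ) - ∑ x, r x y) :=
          fun y => mul_le_mul_of_nonneg_left (by linarith [hry y])
            (div_nonneg (hν0 y) hk0.le)
        have heq : ∑ y, ν y / k * ((k:ℝ) - 1) = a := by
          rw [← Finset.sum_mul, ← Finset.sum_div, hνs, hadef]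
          field_simp
        calc a = ∑ y, ν y / k * ((k:ℝ) - 1) := heq.symm
          _ ≤ ∑ y, ν y / k * ((k:ℝ) - ∑ x, r x y) := Finset.sum_le_sum fun y _ => hge y
      have hval : ∑ z : X × Y, (μ z.1 * W z.1 z.2) * T z = 1 - v := by
        have key : ∀ x, ∑ y, (μ x * W x y) * T (x, y)
            = (1/(k:ℝ)) * (p x - ∑ y, W x y * r x y) := by
          intro x
          have h2 : ∀ y, (μ x * W x y) * T (x, y)
              = (1/(k:ℝ)) * (W x y * p x - W x y * r x y) := by
            intro y
            simp only [hμdef]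
            linear_combination (W x y / (k:ℝ)) * hpT x y
          have h3 : ∑ y, W x y * p x = p x := by
            rw [← Finset.sum_mul, hW_sum x, one_mul]
          rw [Finset.sum_congr rfl fun y _ => h2 y, ← Finset.mul_sum,
            Finset.sum_sub_distrib, h3]
        rw [Fintype.sum_prod_type, Finset.sum_congr rfl fun x _ => key x,
          ← Finset.mul_sum, Finset.sum_sub_distrib, hps, hveq]
        field_simp
      have hfin := betaHT_le (a := a) (P := fun z : X × Y => μ z.1 * ν z.2)
        (Q := fun z : X × Y => μ z.1 * W z.1 z.2)
        (fun z => mul_nonneg (hμ0 z.1) (hW_nonneg z.1 z.2)) T hT0 hT1 hTc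
      rw [hval] at hfin
      exact hfin
    exact le_trans hsup_le (by linarith)
  -- Direction B : 1 - S ≤ sInf B
  have dirB : 1 - SchanNS W k ≤ sInf B := by
    apply le_csInf
    · refine ⟨_, fun _ => 1/(Fintype.card X:ℝ), fun x => by positivity, ?_, rfl⟩
      rw [Finset.sum_const, Finset.card_univ, nsmul_eq_mul]
      field_simp
    rintro vB ⟨μ, hμ0, hμs, rfl⟩
    have hth : ∀ y : Y, ∃ (t : ℝ) (u : X → ℝ), 0 ≤ t ∧ (∀ x, 0 ≤ u x) ∧
        (∀ x, u x ≤ μ x) ∧ (∑ x, u x = a) ∧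
        ∑ x, W x y * u x = a * t - ∑ x, μ x * max (t - W x y) 0 :=
      fun y => threshold_lemma μ (fun x => W x y) hμ0 hμs (fun x => hW_nonneg x y) ha0 ha1
    choose t u ht0 hu0 huμ husum hueq using hth
    set V : ℝ := ∑ y, ∑ x, W x y * u y x with hVdef
    have hstep1 : 1 - V ≤ SchanNS W k := by
      set q : X → ℝ := fun x => min ((k:ℝ) * μ x) 1 with hqdef
      have hq1 : ∀ x, q x ≤ 1 := fun x => min_le_right _ _
      have hqs : ∑ x, q x ≤ (k:ℝ) := by
        calc ∑ x, q x ≤ ∑ x, (k:ℝ) * μ x := Finset.sum_le_sum fun x _ => min_le_left _ _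
          _ = k := by rw [← Finset.mul_sum, hμs, mul_one]
      obtain ⟨p, hqp, hp1, hps⟩ := bump_lemma q k hq1 hqs (by exact_mod_cast hkX)
      set r : X → Y → ℝ := fun x y => (k:ℝ) * (μ x - u y x) with hrdef
      have hr0 : ∀ x y, 0 ≤ r x y :=
        fun x y => mul_nonneg hk0.le (by linarith [huμ y x])
      have hrsum : ∀ y, ∑ x, r x y = 1 := by
        intro y
        simp only [hrdef]
        rw [← Finset.mul_sum, Finset.sum_sub_distrib, hμs, husum y, hadef]
        field_simp; ring
      have hr1 : ∀ x y, r x y ≤ 1 := by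
        intro x y
        calc r x y ≤ ∑ x', r x' y :=
              Finset.single_le_sum (fun x' _ => hr0 x' y) (mem_univ x)
          _ = 1 := hrsum y
      have hrp : ∀ x y, r x y ≤ p x := by
        intro x y
        refine le_trans (le_min ?_ (hr1 x y)) (hqp x)
        simp only [hrdef]
        nlinarith [hu0 y x, hk0.le, hu0 y x]
      have hval : (1 / (k:ℝ)) * ∑ x, ∑ y, W x y * r x y = 1 - V := by
        have key : ∀ x, ∑ y, W x y * r x y = (k:ℝ) * (μ x - ∑ y, W x y * u y x) := by
          intro x
          have h1 : ∀ y, W x y * r x y = (k:ℝ) * (W x y * μ x - W x y * u y x) := by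
            intro y; simp only [hrdef]; ring
          have h2 : ∑ y, W x y * μ x = μ x := by
            rw [← Finset.sum_mul, hW_sum x, one_mul]
          rw [Finset.sum_congr rfl fun y _ => h1 y, ← Finset.mul_sum,
            Finset.sum_sub_distrib, h2]
        rw [Finset.sum_congr rfl fun x _ => key x, ← Finset.mul_sum,
          Finset.sum_sub_distrib, hμs]
        have h4 : ∑ x, ∑ y, W x y * u y x = V := by
          rw [hVdef]; exact Finset.sum_comm
        rw [h4]
        field_simp
      have hmemA : 1 - V ∈ A :=
        ⟨r, p, hr0, hrp, hp1, fun y => le_of_eq (hrsum y), hps, hval.symm⟩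
      rw [hSA]
      exact le_csSup hAbdd hmemA
    set lam : ℝ := ∑ y, t y with hlamdef
    have hlam0 : 0 ≤ lam := Finset.sum_nonneg fun y _ => ht0 y
    have hVform : V = a * lam - ∑ y, ∑ x, μ x * max (t y - W x y) 0 := by
      rw [hVdef, Finset.sum_congr rfl fun y _ => hueq y, Finset.sum_sub_distrib,
        ← Finset.mul_sum, hlamdef]
    rcases eq_or_lt_of_le hlam0 with hlamz | hlampos
    · have htz : ∀ y, t y = 0 := by
        intro y
        exact (Finset.sum_eq_zero_iff_of_nonneg (fun y _ => ht0 y)).mp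
          (by rw [← hlamdef]; exact hlamz.symm) y (mem_univ y)
      have hmax0 : ∀ y, ∑ x, μ x * max (t y - W x y) 0 = 0 := by
        intro y
        apply Finset.sum_eq_zero
        intro x _
        rw [htz y, max_eq_right (by linarith [hW_nonneg x y]), mul_zero]
      have hV0 : V = 0 := by
        rw [hVform, ← hlamz, Finset.sum_congr rfl fun y _ => hmax0 y]
        simp
      obtain ⟨ν, hν0, hνs⟩ := hνunif
      have hb0 : 0 ≤ betaHT a (fun z : X × Y => μ z.1 * ν z.2)
          (fun z : X × Y => μ z.1 * W z.1 z.2) :=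
        betaHT_nonneg (P := fun z : X × Y => μ z.1 * ν z.2)
          (Q := fun z : X × Y => μ z.1 * W z.1 z.2)
          (fun z => mul_nonneg (hμ0 z.1) (hW_nonneg z.1 z.2))
          (hbetafeas μ ν hμs hνs)
      have h1S : 1 - SchanNS W k ≤ 0 := by rw [hV0] at hstep1; linarith
      exact le_trans h1S (le_trans hb0 (le_csSup (hνbdd μ hμ0 hμs) ⟨ν, hν0, hνs, rfl⟩))
    · have hlamne : lam ≠ 0 := ne_of_gt hlampos
      set ν : Y → ℝ := fun y => t y / lam with hνdef
      have hν0 : ∀ y, 0 ≤ ν y := fun y => div_nonneg (ht0 y) hlam0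
      have hνs : ∑ y, ν y = 1 := by
        simp only [hνdef]
        rw [← Finset.sum_div, ← hlamdef, div_self hlamne]
      have hbV : V ≤ betaHT a (fun z : X × Y => μ z.1 * ν z.2)
          (fun z : X × Y => μ z.1 * W z.1 z.2) := by
        apply le_betaHT (P := fun z : X × Y => μ z.1 * ν z.2)
          (Q := fun z : X × Y => μ z.1 * W z.1 z.2) (hbetafeas μ ν hμs hνs)
        intro T hT0 hT1 hTc
        have hM : ∀ x y, μ x * t y * T (x, y) - μ x * max (t y - W x y) 0
            ≤ (μ x * W x y) * T (x, y) := by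
          intro x y
          have h1 : t y - W x y ≤ max (t y - W x y) 0 := le_max_left _ _
          have h2 : 0 ≤ max (t y - W x y) 0 := le_max_right _ _
          nlinarith [mul_nonneg (mul_nonneg (hμ0 x) (hT0 (x, y)))
              (show 0 ≤ W x y - t y + max (t y - W x y) 0 by linarith),
            mul_nonneg (mul_nonneg (hμ0 x) (show 0 ≤ 1 - T (x, y) by linarith [hT1 (x, y)]))
              h2]
        have hsum1 : ∑ z : X × Y, μ z.1 * t z.2 * T z
            = lam * ∑ z : X × Y, (μ z.1 * ν z.2) * T z := by
          rw [Finset.mul_sum]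
          apply Finset.sum_congr rfl
          intro z _
          have h5 : t z.2 = lam * ν z.2 := by
            simp only [hνdef]
            field_simp
          rw [h5]; ring
        have hineq : ∑ z : X × Y, (μ z.1 * t z.2 * T z - μ z.1 * max (t z.2 - W z.1 z.2) 0)
            ≤ ∑ z : X × Y, (μ z.1 * W z.1 z.2) * T z :=
          Finset.sum_le_sum fun z _ => hM z.1 z.2
        have hsum2 : ∑ z : X × Y, μ z.1 * max (t z.2 - W z.1 z.2) 0
            = ∑ y, ∑ x, μ x * max (t y - W x y) 0 := by
          rw [Fintype.sum_prod_type]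
          exact Finset.sum_comm
        rw [Finset.sum_sub_distrib, hsum1, hsum2] at hineq
        have h6 : lam * a ≤ lam * ∑ z : X × Y, (μ z.1 * ν z.2) * T z :=
          mul_le_mul_of_nonneg_left hTc hlam0
        rw [hVform]
        linarith
      exact le_trans (by linarith)
        (le_trans hbV (le_csSup (hνbdd μ hμ0 hμs) ⟨ν, hν0, hνs, rfl⟩))
  exact le_antisymm dirB dirA
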